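/- arXiv:0910.3705 — 5 statements merged into one kernel-verified Lean document; each statement's English description precedes it below -/
import Mathlib

section
/- If A = (A₁, A₁⁻¹, …, A_m, A_m⁻¹) with equal weights λᵢ = 1/(2m) and μ = 1, then the resolvent average R₁(A,λ) equals the identity matrix. -/
open Matrix

lemma key_resolvent (N : ℕ) (A : Matrix (Fin N) (Fin N) ℝ) (hA : A.PosDef) :
    (A + 1)⁻¹ + (A⁻¹ + 1)⁻¹ = 1 := by
  have hAinv : IsUnit A.det := isUnit_iff_ne_zero.mpr hA.det_pos.ne'
  have h1 : (A + 1).PosDef := hA.add_posSemidef (Matrix.PosSemidef.one)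
  have h1u : IsUnit (A + 1).det := isUnit_iff_ne_zero.mpr h1.det_pos.ne'
  have heq : A⁻¹ + 1 = A⁻¹ * (1 + A) := by
    rw [mul_add, mul_one, Matrix.nonsing_inv_mul A hAinv, add_comm]
  have : (A⁻¹ + 1)⁻¹ = (1 + A)⁻¹ * A := by
    rw [heq, Matrix.mul_inv_rev, Matrix.nonsing_inv_nonsing_inv A hAinv]
  rw [this, add_comm A 1]
  have : (1 + A)⁻¹ + (1 + A)⁻¹ * A = (1 + A)⁻¹ * (1 + A) := by
    rw [mul_add, mul_one]
  rw [this, Matrix.nonsing_inv_mul _ (by rwa [add_comm])]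

theorem resolvent_average_of_inverses_eq_id (N m : ℕ) (hm : 0 < m)
    (A : Fin m → Matrix (Fin N) (Fin N) ℝ) (hA : ∀ i, (A i).PosDef) :
    (∑ i, ((1 : ℝ) / (2 * m)) • ((A i + 1)⁻¹ + ((A i)⁻¹ + 1)⁻¹))⁻¹ - 1
      = (1 : Matrix (Fin N) (Fin N) ℝ) := by
  have hsum : (∑ i, ((1 : ℝ) / (2 * m)) • ((A i + 1)⁻¹ + ((A i)⁻¹ + 1)⁻¹))
      = ((1:ℝ)/2) • (1 : Matrix (Fin N) (Fin N) ℝ) := by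
    have : ∀ i, ((1 : ℝ) / (2 * m)) • ((A i + 1)⁻¹ + ((A i)⁻¹ + 1)⁻¹)
        = ((1 : ℝ) / (2 * m)) • (1 : Matrix (Fin N) (Fin N) ℝ) := fun i => by
      rw [key_resolvent N (A i) (hA i)]
    rw [Finset.sum_congr rfl (fun i _ => this i), Finset.sum_const, Finset.card_univ,
      Fintype.card_fin, ← Nat.cast_smul_eq_nsmul ℝ, smul_smul]
    congr 1
    have hm' : (m : ℝ) ≠ 0 := Nat.cast_ne_zero.mpr hm.ne'
    field_simp
  rw [hsum]
  have hinv : (((1:ℝ)/2) • (1 : Matrix (Fin N) (Fin N) ℝ))⁻¹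
      = (2:ℝ) • (1 : Matrix (Fin N) (Fin N) ℝ) := by
    apply Matrix.inv_eq_right_inv
    rw [Matrix.smul_mul, Matrix.mul_smul, one_mul, smul_smul]
    norm_num
  rw [hinv]
  ext i j
  by_cases h : i = j <;> simp [h, Matrix.one_apply, Matrix.sub_apply] <;> norm_num
end

section
/- The resolvent average is monotone: if Aᵢ ⪰ Bᵢ (i.e., Aᵢ − Bᵢ is positive semidefinite) for all i, where all Aᵢ, Bᵢ are positive semidefinite, then R_μ(A,λ) ⪰ R_μ(B,λ). -/
open Matrix

section Aux

variable {N : ℕ}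

open scoped MatrixOrder

lemma herm_smul {M : Matrix (Fin N) (Fin N) ℝ} (hM : M.IsHermitian) (c : ℝ) :
    (c • M).IsHermitian := by
  rw [Matrix.IsHermitian, conjTranspose_smul, star_trivial, hM.eq]

lemma psd_smul {M : Matrix (Fin N) (Fin N) ℝ} (hM : M.PosSemidef) {c : ℝ} (hc : 0 ≤ c) :
    (c • M).PosSemidef := by
  refine .of_dotProduct_mulVec_nonneg (herm_smul hM.1 c) fun x => ?_
  have := hM.dotProduct_mulVec_nonneg x
  calc (0:ℝ) ≤ c * (star x ⬝ᵥ (M *ᵥ x)) := mul_nonneg hc this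
  _ = star x ⬝ᵥ ((c • M) *ᵥ x) := by
      rw [smul_mulVec, dotProduct_smul, smul_eq_mul]

lemma pd_smul {M : Matrix (Fin N) (Fin N) ℝ} (hM : M.PosDef) {c : ℝ} (hc : 0 < c) :
    (c • M).PosDef := by
  refine .of_dotProduct_mulVec_pos (herm_smul hM.1 c) fun x hx => ?_
  have := hM.dotProduct_mulVec_pos hx
  calc (0:ℝ) < c * (star x ⬝ᵥ (M *ᵥ x)) := mul_pos hc this
  _ = star x ⬝ᵥ ((c • M) *ᵥ x) := by
      rw [smul_mulVec, dotProduct_smul, smul_eq_mul]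

lemma pd_conj {A C : Matrix (Fin N) (Fin N) ℝ} (hA : A.PosDef) (hC : IsUnit C.det) :
    (Cᴴ * A * C).PosDef := by
  refine .of_dotProduct_mulVec_pos (isHermitian_conjTranspose_mul_mul C hA.1) fun x hx => ?_
  have hCx : C *ᵥ x ≠ 0 := by
    intro h
    exact hx ((Matrix.mulVec_injective_iff_isUnit.2
      ((Matrix.isUnit_iff_isUnit_det C).2 hC)).eq_iff.mp (by simpa using h))
  have := hA.dotProduct_mulVec_pos hCx
  simpa only [star_mulVec, dotProduct_mulVec, vecMul_vecMul] using this

lemma sqrt_det_isUnit {B : Matrix (Fin N) (Fin N) ℝ} (hB : B.PosDef) :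
    IsUnit (CFC.sqrt B).det := by
  have h1 : CFC.sqrt B * CFC.sqrt B = B := CFC.sqrt_mul_sqrt_self B hB.posSemidef.nonneg
  have h2 : (CFC.sqrt B).det * (CFC.sqrt B).det = B.det := by
    rw [← det_mul, h1]
  have : (CFC.sqrt B).det ≠ 0 := by
    intro h
    rw [h, mul_zero] at h2
    exact hB.det_pos.ne h2
  exact this.isUnit

/-- If `M ⪰ 1` and `M` is positive definite, then `1 ⪰ M⁻¹`. -/
lemma one_sub_inv_psd {M : Matrix (Fin N) (Fin N) ℝ} (hM : M.PosDef)
    (h : (M - 1).PosSemidef) : ((1 : Matrix (Fin N) (Fin N) ℝ) - M⁻¹).PosSemidef := by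
  set R := CFC.sqrt M⁻¹ with hR
  have hRpsd : R.PosSemidef := (CFC.sqrt_nonneg M⁻¹).posSemidef
  have hRR : R * R = M⁻¹ := CFC.sqrt_mul_sqrt_self M⁻¹ hM.inv.posSemidef.nonneg
  have hRdet : IsUnit R.det := sqrt_det_isUnit hM.inv
  have hMdet : IsUnit M.det := (Matrix.isUnit_iff_isUnit_det M).1 hM.isUnit
  have hRMR : R * M * R = 1 := by
    have hMinv : M = R⁻¹ * R⁻¹ := by
      rw [← Matrix.mul_inv_rev, hRR, Matrix.nonsing_inv_nonsing_inv M hMdet]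
    rw [hMinv, ← Matrix.mul_assoc, Matrix.mul_assoc (R * R⁻¹),
      Matrix.mul_nonsing_inv R hRdet, Matrix.nonsing_inv_mul R hRdet,
      Matrix.one_mul]
  have key : (1 : Matrix (Fin N) (Fin N) ℝ) - M⁻¹ = Rᴴ * (M - 1) * R := by
    rw [hRpsd.1, Matrix.mul_sub, Matrix.mul_one, Matrix.sub_mul, hRMR, hRR]
  rw [key]
  exact h.conjTranspose_mul_mul_same R

/-- Loewner antitonicity of the inverse on positive definite matrices. -/
lemma inv_antitone {A B : Matrix (Fin N) (Fin N) ℝ} (hA : A.PosDef) (hB : B.PosDef)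
    (h : (A - B).PosSemidef) : (B⁻¹ - A⁻¹).PosSemidef := by
  set S := CFC.sqrt B with hS
  have hSpsd : S.PosSemidef := (CFC.sqrt_nonneg B).posSemidef
  have hSS : S * S = B := CFC.sqrt_mul_sqrt_self B hB.posSemidef.nonneg
  have hSdet : IsUnit S.det := sqrt_det_isUnit hB
  set T := S⁻¹ with hT
  have hTdet : IsUnit T.det := S.isUnit_nonsing_inv_det hSdet
  have hTherm : Tᴴ = T := by rw [hT, Matrix.conjTranspose_nonsing_inv, hSpsd.1]
  have hTS : T * S = 1 := Matrix.nonsing_inv_mul S hSdet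
  have hST : S * T = 1 := Matrix.mul_nonsing_inv S hSdet
  have hTinv : T⁻¹ = S := Matrix.nonsing_inv_nonsing_inv S hSdet
  set M := T * A * T with hM
  have hMpd : M.PosDef := by
    have := pd_conj hA hTdet
    rwa [hTherm] at this
  have hTBT : T * B * T = 1 := by
    rw [← hSS, ← Matrix.mul_assoc, Matrix.mul_assoc T S S, ← Matrix.mul_assoc T S,
      hTS, Matrix.one_mul, hST]
  have hMsub : (M - 1).PosSemidef := by
    have key : M - 1 = Tᴴ * (A - B) * T := by
      rw [hTherm, hM, ← hTBT, Matrix.mul_sub, Matrix.sub_mul]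
    rw [key]
    exact h.conjTranspose_mul_mul_same T
  have h1 : ((1 : Matrix (Fin N) (Fin N) ℝ) - M⁻¹).PosSemidef := one_sub_inv_psd hMpd hMsub
  have hMinv : M⁻¹ = S * A⁻¹ * S := by
    rw [hM, Matrix.mul_inv_rev, Matrix.mul_inv_rev, hTinv, Matrix.mul_assoc]
  have key : B⁻¹ - A⁻¹ = Tᴴ * ((1 : Matrix (Fin N) (Fin N) ℝ) - M⁻¹) * T := by
    rw [hTherm, Matrix.mul_sub, Matrix.mul_one, Matrix.sub_mul, hMinv]
    congr 1
    · rw [← Matrix.mul_inv_rev, hSS]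
    · rw [← Matrix.mul_assoc, ← Matrix.mul_assoc, hTS, Matrix.one_mul,
        Matrix.mul_assoc, hST, Matrix.mul_one]
  rw [key]
  exact h1.conjTranspose_mul_mul_same T

lemma sum_psd {n : ℕ} {f : Fin n → Matrix (Fin N) (Fin N) ℝ}
    (hf : ∀ i, (f i).PosSemidef) : (∑ i, f i).PosSemidef :=
  Finset.sum_induction f Matrix.PosSemidef (fun _ _ ha hb => ha.add hb)
    Matrix.PosSemidef.zero (fun i _ => hf i)

end Aux

theorem resolvent_average_monotone (N n : ℕ)
    (A B : Fin n → Matrix (Fin N) (Fin N) ℝ) (w : Fin n → ℝ) (μ : ℝ)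
    (hA : ∀ i, (A i).PosSemidef) (hB : ∀ i, (B i).PosSemidef)
    (hAB : ∀ i, (A i - B i).PosSemidef)
    (hw : ∀ i, 0 < w i) (hw1 : ∑ i, w i = 1) (hμ : 0 < μ) :
    (((∑ i, w i • (A i + μ⁻¹ • 1)⁻¹)⁻¹ - μ⁻¹ • (1 : Matrix (Fin N) (Fin N) ℝ))
      - ((∑ i, w i • (B i + μ⁻¹ • 1)⁻¹)⁻¹ - μ⁻¹ • 1)).PosSemidef := by
  rcases Nat.eq_zero_or_pos n with hn | hn
  · subst hn; simp at hw1
  have hc : (0:ℝ) < μ⁻¹ := inv_pos.2 hμ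
  have hcpd : (μ⁻¹ • (1 : Matrix (Fin N) (Fin N) ℝ)).PosDef := pd_smul Matrix.PosDef.one hc
  -- each shifted matrix is positive definite
  have hApd : ∀ i, (A i + μ⁻¹ • (1 : Matrix (Fin N) (Fin N) ℝ)).PosDef :=
    fun i => Matrix.PosDef.posSemidef_add (hA i) hcpd
  have hBpd : ∀ i, (B i + μ⁻¹ • (1 : Matrix (Fin N) (Fin N) ℝ)).PosDef :=
    fun i => Matrix.PosDef.posSemidef_add (hB i) hcpd
  set SA := ∑ i, w i • (A i + μ⁻¹ • (1 : Matrix (Fin N) (Fin N) ℝ))⁻¹ with hSA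
  set SB := ∑ i, w i • (B i + μ⁻¹ • (1 : Matrix (Fin N) (Fin N) ℝ))⁻¹ with hSB
  -- sums are positive definite
  have hsumpd : ∀ (C : Fin n → Matrix (Fin N) (Fin N) ℝ),
      (∀ i, (C i + μ⁻¹ • (1 : Matrix (Fin N) (Fin N) ℝ)).PosDef) →
      (∑ i, w i • (C i + μ⁻¹ • (1 : Matrix (Fin N) (Fin N) ℝ))⁻¹).PosDef := by
    intro C hC
    have j : Fin n := ⟨0, hn⟩
    rw [← Finset.add_sum_erase _ _ (Finset.mem_univ j)]
    exact (pd_smul (hC j).inv (hw j)).add_posSemidef <|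
      Finset.sum_induction _ Matrix.PosSemidef (fun _ _ ha hb => ha.add hb)
        Matrix.PosSemidef.zero (fun i _ => psd_smul (hC i).inv.posSemidef (hw i).le)
  have hSApd : SA.PosDef := hsumpd A hApd
  have hSBpd : SB.PosDef := hsumpd B hBpd
  -- SB - SA is positive semidefinite
  have hdiff : (SB - SA).PosSemidef := by
    rw [hSB, hSA, ← Finset.sum_sub_distrib]
    apply sum_psd
    intro i
    rw [← smul_sub]
    apply psd_smul _ (hw i).le
    apply inv_antitone (hApd i) (hBpd i)
    have : A i + μ⁻¹ • (1 : Matrix (Fin N) (Fin N) ℝ) - (B i + μ⁻¹ • 1) = A i - B i := by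
      abel
    rw [this]
    exact hAB i
  have := inv_antitone hSBpd hSApd hdiff
  rwa [sub_sub_sub_cancel_right]
end

section
/- Harmonic–resolvent–arithmetic inequality: for positive definite matrices A₁,…,Aₙ, one has H(A,λ) ⪯ R_μ(A,λ) ⪯ 𝒜(A,λ), where H(A,λ) = (∑ᵢ λᵢAᵢ⁻¹)⁻¹ is the harmonic average and 𝒜(A,λ) = ∑ᵢ λᵢAᵢ is the arithmetic average. -/
open Matrix Finset
namespace HRA
variable {N n : ℕ}
abbrev Mat (N : ℕ) := Matrix (Fin N) (Fin N) ℝ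

lemma psd_smul {c : ℝ} {M : Mat N} (hc : 0 ≤ c) (hM : M.PosSemidef) : (c • M).PosSemidef := by
  have hMt : Mᵀ = M := by
    ext i j
    simpa using congrFun (congrFun hM.1.eq i) j
  refine ⟨?_, fun x => ?_⟩
  · simp [Matrix.IsHermitian, conjTranspose_smul, hMt]
  · exact (hM.smul hc).2 x

lemma pd_smul {c : ℝ} {M : Mat N} (hc : 0 < c) (hM : M.PosDef) : (c • M).PosDef := by
  have hMt : Mᵀ = M := by
    ext i j
    simpa using congrFun (congrFun hM.1.eq i) j
  refine ⟨?_, fun x hx => ?_⟩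
  · simp [Matrix.IsHermitian, conjTranspose_smul, hMt]
  · exact (hM.smul hc).2 hx

lemma psd_sum (s : Finset (Fin n)) (f : Fin n → Mat N) (hf : ∀ i ∈ s, (f i).PosSemidef) :
    (∑ i ∈ s, f i).PosSemidef :=
  Finset.sum_induction f _ (fun _ _ ha hb => ha.add hb) .zero hf

lemma pd_sum_smul (hn : Nonempty (Fin n)) {w : Fin n → ℝ} {M : Fin n → Mat N}
    (hw : ∀ i, 0 < w i) (hM : ∀ i, (M i).PosDef) : (∑ i, w i • M i).PosDef := by
  obtain ⟨i0⟩ := hn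
  rw [← Finset.add_sum_erase _ _ (Finset.mem_univ i0)]
  exact (pd_smul (hw i0) (hM i0)).add_posSemidef
    (psd_sum _ _ fun i _ => psd_smul (hw i).le (hM i).posSemidef)

lemma congr_psd {M C : Mat N} (hM : M.PosSemidef) (hC : C.IsHermitian) :
    (C * M * C).PosSemidef := by
  have := hM.mul_mul_conjTranspose_same C
  rwa [hC.eq] at this

lemma nonempty_of_sum_one {w : Fin n → ℝ} (hw1 : ∑ i, w i = 1) : Nonempty (Fin n) := by
  by_contra h
  rw [not_nonempty_iff] at h
  rw [Finset.univ_eq_empty, Finset.sum_empty] at hw1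
  norm_num at hw1

/-- Key AM–HM lemma. -/
lemma amhm (M : Fin n → Mat N) (w : Fin n → ℝ)
    (hM : ∀ i, (M i).PosDef) (hw : ∀ i, 0 < w i) (hw1 : ∑ i, w i = 1) :
    ((∑ i, w i • (M i)⁻¹) - (∑ i, w i • M i)⁻¹).PosSemidef := by
  have hn := nonempty_of_sum_one hw1
  set S := ∑ i, w i • M i with hSdef
  have hS : S.PosDef := pd_sum_smul hn hw hM
  have hSd : IsUnit S.det := hS.det_pos.ne'.isUnit
  have hSi : S⁻¹ * S = 1 := Matrix.nonsing_inv_mul S hSd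
  have hSi' : S * S⁻¹ = 1 := Matrix.mul_nonsing_inv S hSd
  have expand : ∀ i, ((M i)⁻¹ - S⁻¹) * M i * ((M i)⁻¹ - S⁻¹)
      = (M i)⁻¹ + S⁻¹ * M i * S⁻¹ - S⁻¹ - S⁻¹ := by
    intro i
    have hMd : IsUnit (M i).det := (hM i).det_pos.ne'.isUnit
    have h1 : (M i)⁻¹ * M i = 1 := Matrix.nonsing_inv_mul _ hMd
    have h2 : M i * (M i)⁻¹ = 1 := Matrix.mul_nonsing_inv _ hMd
    have h1' : ∀ Z : Mat N, (M i)⁻¹ * (M i * Z) = Z := fun Z => by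
      rw [← Matrix.mul_assoc, h1, Matrix.one_mul]
    simp only [Matrix.sub_mul, Matrix.mul_sub, Matrix.mul_assoc, h1, h2, h1',
      Matrix.mul_one, Matrix.one_mul]
    abel
  have hconst : ∑ i, w i • (S⁻¹ : Mat N) = S⁻¹ := by
    rw [← Finset.sum_smul, hw1, one_smul]
  have hmid : ∑ i, w i • (S⁻¹ * M i * S⁻¹) = S⁻¹ := by
    have e1 : ∑ i, w i • (S⁻¹ * M i * S⁻¹) = S⁻¹ * S * S⁻¹ := by
      rw [hSdef, Finset.mul_sum, Finset.sum_mul]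
      exact Finset.sum_congr rfl fun i _ => by rw [Matrix.mul_smul, Matrix.smul_mul]
    rw [e1, hSi, Matrix.one_mul]
  have hsum : (∑ i, w i • (M i)⁻¹) - S⁻¹
      = ∑ i, w i • (((M i)⁻¹ - S⁻¹) * M i * ((M i)⁻¹ - S⁻¹)) := by
    have e2 : ∀ i ∈ Finset.univ, w i • (((M i)⁻¹ - S⁻¹) * M i * ((M i)⁻¹ - S⁻¹))
        = w i • (M i)⁻¹ + w i • (S⁻¹ * M i * S⁻¹) - w i • (S⁻¹ : Mat N)
          - w i • (S⁻¹ : Mat N) := fun i _ => by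
      rw [expand i, smul_sub, smul_sub, smul_add]
    rw [Finset.sum_congr rfl e2, Finset.sum_sub_distrib, Finset.sum_sub_distrib,
      Finset.sum_add_distrib, hconst, hmid]
    abel
  rw [hsum]
  refine psd_sum _ _ fun i _ => psd_smul (hw i).le (congr_psd (hM i).posSemidef ?_)
  exact ((hM i).inv.isHermitian).sub (hS.inv.isHermitian)

/-- Inverse is antitone for the Loewner order. -/
lemma inv_antitone {X Y : Mat N} (hX : X.PosDef) (hY : Y.PosDef)
    (h : (Y - X).PosSemidef) : (X⁻¹ - Y⁻¹).PosSemidef := by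
  have hXd : IsUnit X.det := hX.det_pos.ne'.isUnit
  have hYd : IsUnit Y.det := hY.det_pos.ne'.isUnit
  have hx1 : X⁻¹ * X = 1 := Matrix.nonsing_inv_mul X hXd
  have hx2 : X * X⁻¹ = 1 := Matrix.mul_nonsing_inv X hXd
  have hy1 : Y⁻¹ * Y = 1 := Matrix.nonsing_inv_mul Y hYd
  have hy2 : Y * Y⁻¹ = 1 := Matrix.mul_nonsing_inv Y hYd
  have hx1' : ∀ Z : Mat N, X⁻¹ * (X * Z) = Z := fun Z => by
    rw [← Matrix.mul_assoc, hx1, Matrix.one_mul]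
  have hy1' : ∀ Z : Mat N, Y⁻¹ * (Y * Z) = Z := fun Z => by
    rw [← Matrix.mul_assoc, hy1, Matrix.one_mul]
  have key : X⁻¹ - Y⁻¹ = (Y⁻¹ - X⁻¹) * X * (Y⁻¹ - X⁻¹) + Y⁻¹ * (Y - X) * Y⁻¹ := by
    simp only [Matrix.sub_mul, Matrix.mul_sub, Matrix.mul_assoc, hx1, hx2, hy1, hy2,
      hx1', hy1', Matrix.mul_one, Matrix.one_mul]
    abel
  rw [key]
  exact (congr_psd hX.posSemidef ((hY.inv.isHermitian).sub (hX.inv.isHermitian))).add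
    (congr_psd h (hY.inv.isHermitian))

/-- Resolvent identity. -/
lemma resolvent {X : Mat N} (hX : X.PosDef) {c : ℝ} (hc : 0 < c) :
    (X + c • 1)⁻¹ = c⁻¹ • (1 : Mat N) - c⁻¹ • (1 + c • X⁻¹)⁻¹ := by
  have hXd : IsUnit X.det := hX.det_pos.ne'.isUnit
  have hx2 : X * X⁻¹ = 1 := Matrix.mul_nonsing_inv X hXd
  have hK : (1 + c • X⁻¹ : Mat N).PosDef :=
    Matrix.PosDef.posSemidef_add (Matrix.PosSemidef.one) (pd_smul hc hX.inv)
  have hK2 : (1 + c • X⁻¹ : Mat N) * (1 + c • X⁻¹)⁻¹ = 1 :=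
    Matrix.mul_nonsing_inv _ hK.det_pos.ne'.isUnit
  have hXK : X * (1 + c • X⁻¹) = X + c • 1 := by
    rw [Matrix.mul_add, Matrix.mul_one, Matrix.mul_smul, hx2]
  have h2 : (1 + c • X⁻¹ : Mat N) * (c⁻¹ • (1 : Mat N) - c⁻¹ • (1 + c • X⁻¹)⁻¹) = X⁻¹ := by
    rw [Matrix.mul_sub, Matrix.mul_smul, Matrix.mul_smul, Matrix.mul_one, hK2, smul_add,
      smul_smul, inv_mul_cancel₀ hc.ne', one_smul]
    abel
  have h3 : (X + c • 1) * (c⁻¹ • (1 : Mat N) - c⁻¹ • (1 + c • X⁻¹)⁻¹) = 1 := by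
    rw [← hXK, Matrix.mul_assoc, h2, hx2]
  exact Matrix.inv_eq_right_inv h3

end HRA
open Matrix

theorem harmonic_resolvent_arithmetic (N n : ℕ)
    (A : Fin n → Matrix (Fin N) (Fin N) ℝ) (w : Fin n → ℝ) (μ : ℝ)
    (hA : ∀ i, (A i).PosDef) (hw : ∀ i, 0 < w i) (hw1 : ∑ i, w i = 1)
    (hμ : 0 < μ) :
    (((∑ i, w i • (A i + μ⁻¹ • 1)⁻¹)⁻¹ - μ⁻¹ • (1 : Matrix (Fin N) (Fin N) ℝ))
        - (∑ i, w i • (A i)⁻¹)⁻¹).PosSemidef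
    ∧ ((∑ i, w i • A i)
        - ((∑ i, w i • (A i + μ⁻¹ • 1)⁻¹)⁻¹ - μ⁻¹ • 1)).PosSemidef := by
  have hc : 0 < μ⁻¹ := inv_pos.mpr hμ
  have hn : Nonempty (Fin n) := HRA.nonempty_of_sum_one hw1
  have hone : (μ⁻¹ • 1 : HRA.Mat N).PosSemidef := HRA.psd_smul hc.le .one
  have hB : ∀ i, (A i + μ⁻¹ • 1).PosDef := fun i => (hA i).add_posSemidef hone
  have hT : ∀ i, ((A i + μ⁻¹ • 1)⁻¹).PosDef := fun i => (hB i).inv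
  have hP : (∑ i, w i • (A i + μ⁻¹ • 1)⁻¹).PosDef := HRA.pd_sum_smul hn hw hT
  have hG : (∑ i, w i • (A i)⁻¹).PosDef := HRA.pd_sum_smul hn hw fun i => (hA i).inv
  have hK : ∀ i, ((1 : HRA.Mat N) + μ⁻¹ • (A i)⁻¹).PosDef := fun i =>
    Matrix.PosDef.posSemidef_add .one (HRA.pd_smul hc (hA i).inv)
  -- Step A : AM-HM applied to the K i
  have stepA : ((∑ i, w i • ((1 + μ⁻¹ • (A i)⁻¹ : HRA.Mat N))⁻¹)
      - (∑ i, w i • ((1 : HRA.Mat N) + μ⁻¹ • (A i)⁻¹))⁻¹).PosSemidef :=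
    HRA.amhm _ w hK hw hw1
  -- Step B : ∑ w i • K i = 1 + μ⁻¹ • G
  have stepB : ∑ i, w i • ((1 : HRA.Mat N) + μ⁻¹ • (A i)⁻¹)
      = 1 + μ⁻¹ • ∑ i, w i • (A i)⁻¹ := by
    have e : ∀ i ∈ Finset.univ, w i • ((1 : HRA.Mat N) + μ⁻¹ • (A i)⁻¹)
        = w i • (1 : HRA.Mat N) + μ⁻¹ • (w i • (A i)⁻¹) := fun i _ => by
      rw [smul_add, smul_comm]
    rw [Finset.sum_congr rfl e, Finset.sum_add_distrib, ← Finset.sum_smul, hw1, one_smul,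
      ← Finset.smul_sum]
  -- Step D : resolvent expansion of P
  have stepD : ∑ i, w i • (A i + μ⁻¹ • 1)⁻¹
      = (μ⁻¹)⁻¹ • (1 : HRA.Mat N)
        - (μ⁻¹)⁻¹ • ∑ i, w i • ((1 : HRA.Mat N) + μ⁻¹ • (A i)⁻¹)⁻¹ := by
    have e : ∀ i ∈ Finset.univ, w i • (A i + μ⁻¹ • 1)⁻¹
        = (μ⁻¹)⁻¹ • (w i • (1 : HRA.Mat N))
          - (μ⁻¹)⁻¹ • (w i • ((1 : HRA.Mat N) + μ⁻¹ • (A i)⁻¹)⁻¹) := fun i _ => by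
      rw [HRA.resolvent (hA i) hc, smul_sub, smul_comm (w i), smul_comm (w i)]
    rw [Finset.sum_congr rfl e, Finset.sum_sub_distrib, ← Finset.smul_sum, ← Finset.smul_sum,
      ← Finset.sum_smul, hw1, one_smul]
  -- Step E : resolvent expansion of (G⁻¹ + μ⁻¹ • 1)⁻¹
  have hGinv : ((∑ i, w i • (A i)⁻¹)⁻¹)⁻¹ = ∑ i, w i • (A i)⁻¹ :=
    Matrix.nonsing_inv_nonsing_inv _ hG.det_pos.ne'.isUnit
  have hHc : ((∑ i, w i • (A i)⁻¹)⁻¹ + μ⁻¹ • 1 : HRA.Mat N).PosDef :=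
    hG.inv.add_posSemidef hone
  have stepE : ((∑ i, w i • (A i)⁻¹)⁻¹ + μ⁻¹ • (1 : HRA.Mat N))⁻¹
      = (μ⁻¹)⁻¹ • (1 : HRA.Mat N)
        - (μ⁻¹)⁻¹ • ((1 : HRA.Mat N) + μ⁻¹ • ∑ i, w i • (A i)⁻¹)⁻¹ := by
    rw [HRA.resolvent hG.inv hc, hGinv]
  -- Step F : Q - P is PSD
  have hQP : (((∑ i, w i • (A i)⁻¹)⁻¹ + μ⁻¹ • (1 : HRA.Mat N))⁻¹
      - ∑ i, w i • (A i + μ⁻¹ • 1)⁻¹).PosSemidef := by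
    have e : ((∑ i, w i • (A i)⁻¹)⁻¹ + μ⁻¹ • (1 : HRA.Mat N))⁻¹
        - ∑ i, w i • (A i + μ⁻¹ • 1)⁻¹
        = (μ⁻¹)⁻¹ • ((∑ i, w i • ((1 : HRA.Mat N) + μ⁻¹ • (A i)⁻¹)⁻¹)
          - ((1 : HRA.Mat N) + μ⁻¹ • ∑ i, w i • (A i)⁻¹)⁻¹) := by
      rw [stepE, stepD, smul_sub]
      abel
    rw [e]
    refine HRA.psd_smul (by positivity) ?_
    rw [← stepB]
    exact stepA
  -- antitone inverse
  have main1 := HRA.inv_antitone hP hHc.inv hQP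
  rw [Matrix.nonsing_inv_nonsing_inv _ hHc.det_pos.ne'.isUnit] at main1
  constructor
  · have heq : ((∑ i, w i • (A i + μ⁻¹ • 1)⁻¹)⁻¹ - μ⁻¹ • (1 : Matrix (Fin N) (Fin N) ℝ))
        - (∑ i, w i • (A i)⁻¹)⁻¹
        = (∑ i, w i • (A i + μ⁻¹ • 1)⁻¹)⁻¹
          - ((∑ i, w i • (A i)⁻¹)⁻¹ + μ⁻¹ • 1) := by abel
    rw [heq]
    exact main1
  · have stepA2 : ((∑ i, w i • ((A i + μ⁻¹ • 1)⁻¹)⁻¹)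
        - (∑ i, w i • (A i + μ⁻¹ • 1)⁻¹)⁻¹).PosSemidef := HRA.amhm _ w hT hw hw1
    have e : ∑ i, w i • ((A i + μ⁻¹ • 1)⁻¹)⁻¹
        = (∑ i, w i • A i) + μ⁻¹ • (1 : HRA.Mat N) := by
      have e2 : ∀ i ∈ Finset.univ, w i • ((A i + μ⁻¹ • 1)⁻¹)⁻¹
          = w i • A i + w i • (μ⁻¹ • (1 : HRA.Mat N)) := fun i _ => by
        rw [Matrix.nonsing_inv_nonsing_inv _ (hB i).det_pos.ne'.isUnit, smul_add]
      rw [Finset.sum_congr rfl e2, Finset.sum_add_distrib, ← Finset.sum_smul, hw1, one_smul]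
    rw [e] at stepA2
    have heq2 : (∑ i, w i • A i)
        - ((∑ i, w i • (A i + μ⁻¹ • 1)⁻¹)⁻¹ - μ⁻¹ • (1 : Matrix (Fin N) (Fin N) ℝ))
        = (∑ i, w i • A i) + μ⁻¹ • (1 : HRA.Mat N)
          - (∑ i, w i • (A i + μ⁻¹ • 1)⁻¹)⁻¹ := by abel
    rw [heq2]
    exact stepA2
end

section
/- As μ → 0⁺, the resolvent average converges to the arithmetic average: lim_{μ→0⁺} R_μ(A,λ) = λ₁A₁ + ⋯ + λₙAₙ. -/
open Matrix Filter

private lemma posDef_smul'' {N : ℕ} {c : ℝ} (hc : 0 < c) {M : Matrix (Fin N) (Fin N) ℝ}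
    (hM : M.PosDef) : (c • M).PosDef := by
  refine Matrix.PosDef.of_dotProduct_mulVec_pos ?_ fun x hx => ?_
  · show _ᴴ = _
    rw [conjTranspose_smul, star_trivial, hM.1.eq]
  · rw [smul_mulVec, dotProduct_smul, smul_eq_mul]
    exact mul_pos hc (hM.dotProduct_mulVec_pos hx)

private lemma posDef_sum'' {N n : ℕ} [NeZero n] {M : Fin n → Matrix (Fin N) (Fin N) ℝ}
    (h : ∀ i, (M i).PosDef) : (∑ i, M i).PosDef := by
  refine Matrix.PosDef.of_dotProduct_mulVec_pos ?_ fun x hx => ?_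
  · show _ᴴ = _
    rw [conjTranspose_sum]
    exact Finset.sum_congr rfl fun i _ => (h i).1.eq
  · have key : star x ⬝ᵥ ((∑ i, M i) *ᵥ x) = ∑ i, star x ⬝ᵥ (M i *ᵥ x) := by
      simp only [dotProduct, mulVec, Matrix.sum_apply, Finset.sum_apply, Finset.sum_mul,
        Finset.mul_sum]
      calc (∑ j : Fin N, ∑ k : Fin N, ∑ i : Fin n, star x j * (M i j k * x k))
          = ∑ j : Fin N, ∑ i : Fin n, ∑ k : Fin N, star x j * (M i j k * x k) :=
            Finset.sum_congr rfl fun j _ => Finset.sum_comm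
        _ = ∑ i : Fin n, ∑ j : Fin N, ∑ k : Fin N, star x j * (M i j k * x k) :=
            Finset.sum_comm
    rw [key]
    exact Finset.sum_pos (fun i _ => (h i).dotProduct_mulVec_pos hx) Finset.univ_nonempty

theorem resolvent_average_tendsto_arithmetic (N n : ℕ)
    (A : Fin n → Matrix (Fin N) (Fin N) ℝ) (w : Fin n → ℝ)
    (hA : ∀ i, (A i).PosDef) (hw : ∀ i, 0 < w i) (hw1 : ∑ i, w i = 1) :
    Tendsto (fun μ : ℝ =>
        (∑ i, w i • (A i + μ⁻¹ • 1)⁻¹)⁻¹ - μ⁻¹ • (1 : Matrix (Fin N) (Fin N) ℝ))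
      (nhdsWithin 0 (Set.Ioi 0)) (nhds (∑ i, w i • A i)) := by
  haveI : NeZero n := ⟨by rintro rfl; simp at hw1⟩
  set f : ℝ → Matrix (Fin N) (Fin N) ℝ := fun μ =>
    (∑ i, w i • (μ • A i + 1 : Matrix (Fin N) (Fin N) ℝ)⁻¹)⁻¹ *
      (∑ i, w i • ((μ • A i + 1 : Matrix (Fin N) (Fin N) ℝ)⁻¹ * A i)) with hf
  -- continuity facts
  have hinv1 : Tendsto Inv.inv (nhds (1 : Matrix (Fin N) (Fin N) ℝ))
      (nhds (1 : Matrix (Fin N) (Fin N) ℝ)) := by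
    have h := continuousAt_matrix_inv (1 : Matrix (Fin N) (Fin N) ℝ)
      (by rw [det_one]; exact NormedRing.inverse_continuousAt (1 : ℝˣ))
    rw [ContinuousAt, inv_one] at h
    exact h
  have hTi : ∀ i : Fin n, Tendsto
      (fun μ : ℝ => (μ • A i + 1 : Matrix (Fin N) (Fin N) ℝ)⁻¹) (nhds 0)
      (nhds (1 : Matrix (Fin N) (Fin N) ℝ)) := by
    intro i
    have h1 : ContinuousAt (fun μ : ℝ => (μ • A i + 1 : Matrix (Fin N) (Fin N) ℝ)) 0 :=
      (continuousAt_id.smul continuousAt_const).add continuousAt_const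
    rw [ContinuousAt] at h1
    simp only [zero_smul, zero_add] at h1
    exact hinv1.comp h1
  have hg : Tendsto (fun μ : ℝ => ∑ i, w i • (μ • A i + 1 : Matrix (Fin N) (Fin N) ℝ)⁻¹)
      (nhds 0) (nhds (1 : Matrix (Fin N) (Fin N) ℝ)) := by
    have h := tendsto_finset_sum (f := fun i (μ : ℝ) =>
        w i • (μ • A i + 1 : Matrix (Fin N) (Fin N) ℝ)⁻¹) Finset.univ
      (fun i _ => (hTi i).const_smul (w i))
    rwa [show (∑ i, w i • (1 : Matrix (Fin N) (Fin N) ℝ)) = 1 by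
      rw [← Finset.sum_smul, hw1, one_smul]] at h
  have hh : Tendsto
      (fun μ : ℝ => ∑ i, w i • ((μ • A i + 1 : Matrix (Fin N) (Fin N) ℝ)⁻¹ * A i))
      (nhds 0) (nhds (∑ i, w i • A i)) := by
    have h := tendsto_finset_sum (f := fun i (μ : ℝ) =>
        w i • ((μ • A i + 1 : Matrix (Fin N) (Fin N) ℝ)⁻¹ * A i)) Finset.univ
      (fun i _ => ((hTi i).mul tendsto_const_nhds).const_smul (w i))
    simpa only [one_mul] using h
  have hfc : Tendsto f (nhds 0) (nhds (∑ i, w i • A i)) := by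
    have h := (hinv1.comp hg).mul hh
    simp only [inv_one, one_mul] at h
    exact h
  -- eventual equality on Ioi 0
  have heq : ∀ μ : ℝ, 0 < μ →
      f μ = (∑ i, w i • (A i + μ⁻¹ • 1)⁻¹)⁻¹ - μ⁻¹ • (1 : Matrix (Fin N) (Fin N) ℝ) := by
    intro μ hμ
    have hμ0 : μ ≠ 0 := ne_of_gt hμ
    set T : Fin n → Matrix (Fin N) (Fin N) ℝ := fun i => (μ • A i + 1)⁻¹ with hT
    have hP : ∀ i, (μ • A i + 1 : Matrix (Fin N) (Fin N) ℝ).PosDef := fun i =>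
      (posDef_smul'' hμ (hA i)).add Matrix.PosDef.one
    have hdet : ∀ i, IsUnit (μ • A i + 1 : Matrix (Fin N) (Fin N) ℝ).det := fun i =>
      isUnit_iff_ne_zero.mpr (hP i).det_pos.ne'
    set B : Matrix (Fin N) (Fin N) ℝ := ∑ i, w i • T i with hB
    set C : Matrix (Fin N) (Fin N) ℝ := ∑ i, w i • (T i * A i) with hC
    have hBpd : B.PosDef := posDef_sum'' fun i => posDef_smul'' (hw i) (hP i).inv
    have hBdet : IsUnit B.det := isUnit_iff_ne_zero.mpr hBpd.det_pos.ne'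
    -- step 1 : (A i + μ⁻¹ • 1)⁻¹ = μ • T i
    have hstep1 : ∀ i, (A i + μ⁻¹ • 1 : Matrix (Fin N) (Fin N) ℝ)⁻¹ = μ • T i := by
      intro i
      have e1 : (A i + μ⁻¹ • 1 : Matrix (Fin N) (Fin N) ℝ) = μ⁻¹ • (μ • A i + 1) := by
        rw [smul_add, smul_smul, inv_mul_cancel₀ hμ0, one_smul]
      haveI : Invertible (μ⁻¹) := invertibleOfNonzero (inv_ne_zero hμ0)
      rw [e1, Matrix.inv_smul (μ • A i + 1) μ⁻¹ (hdet i), invOf_eq_inv, inv_inv, hT]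
    -- sum becomes μ • B
    have hsum : (∑ i, w i • (A i + μ⁻¹ • 1 : Matrix (Fin N) (Fin N) ℝ)⁻¹) = μ • B := by
      rw [hB, Finset.smul_sum]
      exact Finset.sum_congr rfl fun i _ => by rw [hstep1 i, smul_comm]
    -- 1 - B = μ • C
    have hone : (1 : Matrix (Fin N) (Fin N) ℝ) = ∑ i, w i • (1 : Matrix (Fin N) (Fin N) ℝ) := by
      rw [← Finset.sum_smul, hw1, one_smul]
    have hTmul : ∀ i, (1 : Matrix (Fin N) (Fin N) ℝ) - T i = μ • (T i * A i) := by
      intro i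
      have e2 : T i * (μ • A i + 1) = 1 := Matrix.nonsing_inv_mul _ (hdet i)
      rw [mul_add, mul_one] at e2
      rw [← e2, mul_smul_comm]
      abel
    have h1B : (1 : Matrix (Fin N) (Fin N) ℝ) - B = μ • C := by
      rw [hB, hC, Finset.smul_sum]
      calc (1 : Matrix (Fin N) (Fin N) ℝ) - ∑ i, w i • T i
          = ∑ i, (w i • (1 : Matrix (Fin N) (Fin N) ℝ) - w i • T i) := by
            rw [Finset.sum_sub_distrib, ← hone]
        _ = ∑ i, w i • (μ • (T i * A i)) :=
            Finset.sum_congr rfl fun i _ => by rw [← smul_sub, hTmul i]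
        _ = ∑ i, μ • (w i • (T i * A i)) :=
            Finset.sum_congr rfl fun i _ => smul_comm _ _ _
    -- put it together
    haveI : Invertible μ := invertibleOfNonzero hμ0
    rw [hf, hsum, Matrix.inv_smul B μ hBdet, invOf_eq_inv, ← smul_sub,
      show B⁻¹ - 1 = B⁻¹ * (1 - B) by
        rw [mul_sub, mul_one, Matrix.nonsing_inv_mul _ hBdet],
      h1B, mul_smul_comm, smul_smul, inv_mul_cancel₀ hμ0, one_smul]
  refine (hfc.mono_left nhdsWithin_le_nhds).congr' ?_
  filter_upwards [self_mem_nhdsWithin] with μ hμ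
  exact heq μ hμ
end

section
/- Self-duality of the resolvent average: for positive definite A₁,…,Aₙ and μ > 0, the inverse of R_μ(A,λ) equals R_{μ⁻¹}(A⁻¹,λ), i.e., [ (∑ᵢ λᵢ(Aᵢ + μ⁻¹Id)⁻¹)⁻¹ − μ⁻¹Id ]⁻¹ = (∑ᵢ λᵢ(Aᵢ⁻¹ + μId)⁻¹)⁻¹ − μId. -/
open Matrix

private lemma myPosDef_smul {N : ℕ} {c : ℝ} {M : Matrix (Fin N) (Fin N) ℝ} (hc : 0 < c)
    (hM : M.PosDef) : (c • M).PosDef := by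
  refine Matrix.PosDef.of_dotProduct_mulVec_pos ?_ (fun x hx => ?_)
  · unfold Matrix.IsHermitian
    rw [conjTranspose_smul, hM.1.eq]
    simp
  · simp only [smul_mulVec, dotProduct_smul, smul_eq_mul]
    exact mul_pos hc (hM.dotProduct_mulVec_pos hx)

private lemma myPosDef_sum {N n : ℕ} (hn : 0 < n) {M : Fin n → Matrix (Fin N) (Fin N) ℝ}
    (h : ∀ i, (M i).PosDef) : (∑ i, M i).PosDef := by
  refine Matrix.PosDef.of_dotProduct_mulVec_pos ?_ (fun x hx => ?_)
  · unfold Matrix.IsHermitian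
    rw [conjTranspose_sum]
    exact Finset.sum_congr rfl fun i _ => (h i).1
  · have key : ∀ s : Finset (Fin n),
        star x ⬝ᵥ (∑ i ∈ s, M i) *ᵥ x = ∑ i ∈ s, star x ⬝ᵥ (M i *ᵥ x) := by
      intro s
      induction s using Finset.induction_on with
      | empty => simp
      | insert _ _ hs ih =>
        rw [Finset.sum_insert hs, Finset.sum_insert hs, add_mulVec, dotProduct_add, ih]
    rw [key]
    have : Nonempty (Fin n) := ⟨⟨0, hn⟩⟩
    exact Finset.sum_pos (fun i _ => (h i).dotProduct_mulVec_pos hx) Finset.univ_nonempty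

private lemma myPosDef_conj {N : ℕ} {B M : Matrix (Fin N) (Fin N) ℝ} (hM : M.PosDef)
    (hB : IsUnit B.det) : (Bᴴ * M * B).PosDef := by
  refine Matrix.PosDef.of_dotProduct_mulVec_pos (hM.posSemidef.conjTranspose_mul_mul_same B).1 (fun x hx => ?_)
  have hBx : B *ᵥ x ≠ 0 := by
    intro h0
    apply hx
    have : B⁻¹ *ᵥ (B *ᵥ x) = x := by
      rw [mulVec_mulVec, nonsing_inv_mul _ hB, one_mulVec]
    rw [← this, h0, mulVec_zero]
  have h2 := hM.dotProduct_mulVec_pos hBx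
  rwa [star_mulVec, ← dotProduct_mulVec, mulVec_mulVec, mulVec_mulVec] at h2

theorem resolvent_average_self_dual (N n : ℕ)
    (A : Fin n → Matrix (Fin N) (Fin N) ℝ) (w : Fin n → ℝ) (μ : ℝ)
    (hA : ∀ i, (A i).PosDef) (hw : ∀ i, 0 < w i) (hw1 : ∑ i, w i = 1)
    (hμ : 0 < μ) :
    ((∑ i, w i • (A i + μ⁻¹ • 1)⁻¹)⁻¹ - μ⁻¹ • (1 : Matrix (Fin N) (Fin N) ℝ))⁻¹
      = (∑ i, w i • ((A i)⁻¹ + μ • 1)⁻¹)⁻¹ - μ • 1 := by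
  have hμ0 : μ ≠ 0 := hμ.ne'
  have hn : 0 < n := by
    rcases Nat.eq_zero_or_pos n with h | h
    · subst h; simp at hw1
    · exact h
  have hdet : ∀ (M : Matrix (Fin N) (Fin N) ℝ), M.PosDef → IsUnit M.det :=
    fun M hM => isUnit_iff_ne_zero.mpr hM.det_pos.ne'
  set B : Fin n → Matrix (Fin N) (Fin N) ℝ := fun i => A i + μ⁻¹ • 1 with hBdef
  have hB : ∀ i, (B i).PosDef :=
    fun i => (hA i).add (myPosDef_smul (inv_pos.mpr hμ) Matrix.PosDef.one)
  -- step 1 : per-index identity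
  have step1 : ∀ i, ((A i)⁻¹ + μ • 1)⁻¹ = μ⁻¹ • (1 : Matrix (Fin N) (Fin N) ℝ)
      - (μ⁻¹ * μ⁻¹) • (B i)⁻¹ := by
    intro i
    apply Matrix.inv_eq_right_inv
    have hAu : IsUnit (A i).det := hdet _ (hA i)
    have hBu : IsUnit (B i).det := hdet _ (hB i)
    have key : (A i)⁻¹ * (B i)⁻¹ = μ • ((A i)⁻¹ - (B i)⁻¹) := by
      have h1 : (A i)⁻¹ * (B i - A i) * (B i)⁻¹ = (A i)⁻¹ - (B i)⁻¹ := by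
        rw [Matrix.mul_sub, Matrix.nonsing_inv_mul _ hAu, Matrix.sub_mul,
          Matrix.mul_assoc, Matrix.mul_nonsing_inv _ hBu, Matrix.mul_one, Matrix.one_mul]
      have h2 : B i - A i = μ⁻¹ • (1 : Matrix (Fin N) (Fin N) ℝ) := by
        rw [hBdef]; exact add_sub_cancel_left _ _
      rw [h2] at h1
      rw [Matrix.mul_smul, Matrix.mul_one, Matrix.smul_mul] at h1
      rw [← h1, smul_smul, mul_inv_cancel₀ hμ0, one_smul]
    simp only [Matrix.add_mul, Matrix.mul_sub, Matrix.mul_smul, Matrix.smul_mul,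
      Matrix.mul_one, Matrix.one_mul, smul_smul]
    rw [key]
    match_scalars <;> field_simp <;> ring
  -- step 2 : summed identity
  set S : Matrix (Fin N) (Fin N) ℝ := ∑ i, w i • (B i)⁻¹ with hSdef
  have hsum : ∑ i, w i • ((A i)⁻¹ + μ • 1)⁻¹
      = μ⁻¹ • (1 : Matrix (Fin N) (Fin N) ℝ) - (μ⁻¹ * μ⁻¹) • S := by
    have h : ∀ i ∈ Finset.univ, w i • ((A i)⁻¹ + μ • 1)⁻¹
        = w i • (μ⁻¹ • (1 : Matrix (Fin N) (Fin N) ℝ)) - (μ⁻¹ * μ⁻¹) • (w i • (B i)⁻¹) := by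
      intro i _
      rw [step1 i]
      module
    rw [Finset.sum_congr rfl h, Finset.sum_sub_distrib, ← Finset.sum_smul, hw1, one_smul,
      ← Finset.smul_sum]
  -- positive definiteness facts
  have hS : S.PosDef := myPosDef_sum hn (fun i => myPosDef_smul (hw i) (hB i).inv)
  have hμB : ∀ i, (μ • (1 : Matrix (Fin N) (Fin N) ℝ) - (B i)⁻¹).PosDef := by
    intro i
    have hM1 : ((A i)ᴴ * (μ • (1 : Matrix (Fin N) (Fin N) ℝ)) * (A i)).PosDef :=
      myPosDef_conj (myPosDef_smul hμ Matrix.PosDef.one) (hdet _ (hA i))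
    have e1 : (A i)ᴴ * (μ • (1 : Matrix (Fin N) (Fin N) ℝ)) * (A i) = μ • (A i * A i) := by
      rw [(hA i).1.eq, Matrix.mul_smul, Matrix.mul_one, Matrix.smul_mul]
    rw [e1] at hM1
    have hM2 : (μ • (A i * A i) + A i).PosDef := hM1.add (hA i)
    have hM3 : ((B i)⁻¹ᴴ * (μ • (A i * A i) + A i) * (B i)⁻¹).PosDef :=
      myPosDef_conj hM2 (hdet _ (hB i).inv)
    have e2 : (B i)⁻¹ᴴ = (B i)⁻¹ := ((hB i).inv).1.eq
    have hBu : IsUnit (B i).det := hdet _ (hB i)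
    have e3 : (B i)⁻¹ * (μ • (A i * A i) + A i) * (B i)⁻¹
        = μ • (1 : Matrix (Fin N) (Fin N) ℝ) - (B i)⁻¹ := by
      have e4 : μ • (A i * A i) + A i = (μ • A i) * B i := by
        rw [hBdef]
        simp only [Matrix.mul_add, Matrix.smul_mul, Matrix.mul_smul, Matrix.mul_one,
          smul_smul, mul_inv_cancel₀ hμ0, inv_mul_cancel₀ hμ0, one_smul]
      have e5 : A i = B i - μ⁻¹ • (1 : Matrix (Fin N) (Fin N) ℝ) := by
        rw [hBdef]; exact (add_sub_cancel_right _ _).symm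
      rw [e4, ← Matrix.mul_assoc, Matrix.mul_assoc ((B i)⁻¹ * (μ • A i)),
        Matrix.mul_nonsing_inv _ hBu, Matrix.mul_one, Matrix.mul_smul]
      rw [e5, Matrix.mul_sub, Matrix.nonsing_inv_mul _ hBu, Matrix.mul_smul, Matrix.mul_one,
        smul_sub, smul_smul, mul_inv_cancel₀ hμ0, one_smul]
    rw [e2, e3] at hM3
    exact hM3
  have hDsum : μ • (1 : Matrix (Fin N) (Fin N) ℝ) - S
      = ∑ i, w i • (μ • (1 : Matrix (Fin N) (Fin N) ℝ) - (B i)⁻¹) := by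
    have h : ∀ i ∈ Finset.univ, w i • (μ • (1 : Matrix (Fin N) (Fin N) ℝ) - (B i)⁻¹)
        = w i • (μ • (1 : Matrix (Fin N) (Fin N) ℝ)) - w i • (B i)⁻¹ := by
      intro i _; rw [smul_sub]
    rw [Finset.sum_congr rfl h, Finset.sum_sub_distrib, ← Finset.sum_smul, hw1, one_smul, hSdef]
  have hD : (μ • (1 : Matrix (Fin N) (Fin N) ℝ) - S).PosDef := by
    rw [hDsum]
    exact myPosDef_sum hn (fun i => myPosDef_smul (hw i) (hμB i))
  have hSu : IsUnit S.det := hdet _ hS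
  have hDu : IsUnit (μ • (1 : Matrix (Fin N) (Fin N) ℝ) - S).det := hdet _ hD
  set D : Matrix (Fin N) (Fin N) ℝ := μ • 1 - S with hDdef
  -- final algebra
  rw [hsum]
  have e1 : μ⁻¹ • (1 : Matrix (Fin N) (Fin N) ℝ) - (μ⁻¹ * μ⁻¹) • S = (μ⁻¹ * μ⁻¹) • D := by
    rw [hDdef, smul_sub, smul_smul]
    congr 2
    field_simp
  have e2 : (μ⁻¹ • (1 : Matrix (Fin N) (Fin N) ℝ) - (μ⁻¹ * μ⁻¹) • S)⁻¹ = (μ * μ) • D⁻¹ := by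
    apply Matrix.inv_eq_right_inv
    rw [e1, Matrix.smul_mul, Matrix.mul_smul, smul_smul, Matrix.mul_nonsing_inv _ hDu]
    rw [show μ⁻¹ * μ⁻¹ * (μ * μ) = 1 by field_simp, one_smul]
  rw [e2]
  apply Matrix.inv_eq_left_inv
  have key2 : D⁻¹ * S⁻¹ = μ⁻¹ • (D⁻¹ + S⁻¹) := by
    have h1 : D⁻¹ * (S + D) * S⁻¹ = D⁻¹ + S⁻¹ := by
      rw [Matrix.mul_add, Matrix.nonsing_inv_mul _ hDu, Matrix.add_mul, Matrix.mul_assoc,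
        Matrix.mul_nonsing_inv _ hSu, Matrix.mul_one, Matrix.one_mul]
    have h2 : S + D = μ • (1 : Matrix (Fin N) (Fin N) ℝ) := by
      rw [hDdef]; abel
    rw [h2, Matrix.mul_smul, Matrix.mul_one, Matrix.smul_mul] at h1
    rw [← h1, smul_smul, inv_mul_cancel₀ hμ0, one_smul]
  simp only [Matrix.sub_mul, Matrix.mul_sub, Matrix.smul_mul, Matrix.mul_smul,
    Matrix.mul_one, Matrix.one_mul, smul_smul]
  rw [key2]
  match_scalars <;> field_simp <;> ring
end
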